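/- Let G = (V, E) be a finite connected simple graph with the shortest-path metric δ, and let D ⊆ V with 2 ≤ |D| and D ≠ V. Then D is an efficient dominating set of G if and only if the set P = D satisfies r_P = 3/2 and R_P = 1 (i.e., the minimum pairwise graph distance in D equals 3 and every vertex of V is at graph distance at most 1 from D, with some vertex at distance exactly 1). -/
import Mathlib


/-- Minimum gap of a vertex set `P` with respect to the shortest-path metric of `G`:
half the least pairwise graph distance. -/
noncomputable def graphMinGap {V : Type*} (G : SimpleGraph V) (P : Set V) : ℝ :=
  sInf {d : ℝ | ∃ p ∈ P, ∃ q ∈ P, p ≠ q ∧ d = (G.dist p q : ℝ)} / 2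

/-- Maximum gap of a vertex set `P` with respect to the shortest-path metric of `G`:
the largest graph distance from a vertex to the set `P`. -/
noncomputable def graphMaxGap {V : Type*} (G : SimpleGraph V) (P : Set V) : ℝ :=
  sSup (Set.range fun v : V => sInf {d : ℝ | ∃ p ∈ P, d = (G.dist v p : ℝ)})

/-- Gap ratio of a vertex set `P` in the shortest-path metric of `G`. -/
noncomputable def graphGapRatio {V : Type*} (G : SimpleGraph V) (P : Set V) : ℝ :=
  graphMaxGap G P / graphMinGap G P

/-- `D` is an efficient dominating set of `G`: every closed neighbourhood meets `D`
in exactly one vertex. -/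
def IsEfficientDominating {V : Type*} (G : SimpleGraph V) (D : Set V) : Prop :=
  ∀ v : V, ∃! u, u ∈ D ∧ (u = v ∨ G.Adj v u)

lemma aux_eff_dist {V : Type*} {G : SimpleGraph V} (hG : G.Connected)
    {D : Set V} (hD : IsEfficientDominating G D) {p q : V} (hp : p ∈ D) (hq : q ∈ D)
    (hpq : p ≠ q) : 3 ≤ G.dist p q := by
  by_contra h
  push_neg at h
  have h1 : 1 ≤ G.dist p q := hG.pos_dist_of_ne hpq
  interval_cases hd : G.dist p q
  · -- dist = 1, adjacent
    have hadj : G.Adj p q := SimpleGraph.dist_eq_one_iff_adj.mp hd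
    obtain ⟨u, -, hu⟩ := hD p
    have e1 := hu p ⟨hp, Or.inl rfl⟩
    have e2 := hu q ⟨hq, Or.inr hadj⟩
    exact hpq (e1.trans e2.symm)
  · -- dist = 2, common neighbor
    obtain ⟨W, hW⟩ := (hG p q).exists_walk_length_eq_dist
    rw [hd] at hW
    set m := W.getVert 1 with hm
    have h01 : G.Adj p m := by
      have := W.adj_getVert_succ (i := 0) (by omega)
      rwa [W.getVert_zero] at this
    have h12 : G.Adj m q := by
      have := W.adj_getVert_succ (i := 1) (by omega)
      have h2 : W.getVert 2 = q := by rw [← hW]; exact W.getVert_length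
      rwa [h2] at this
    obtain ⟨u, -, hu⟩ := hD m
    have e1 := hu p ⟨hp, Or.inr h01.symm⟩
    have e2 := hu q ⟨hq, Or.inr h12⟩
    exact hpq (e1.trans e2.symm)

lemma aux_exists_dist_two {V : Type*} {G : SimpleGraph V} (hG : G.Connected)
    {p q : V} (h : 2 ≤ G.dist p q) : ∃ w : V, G.dist p w = 2 := by
  obtain ⟨W, hW⟩ := (hG p q).exists_walk_length_eq_dist
  have hmem : 2 ≤ G.dist p (W.getVert W.length) := by rw [W.getVert_length]; exact h
  classical
  have hex : ∃ k, 2 ≤ G.dist p (W.getVert k) := ⟨W.length, hmem⟩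
  set k₀ := Nat.find hex with hk₀
  have hspec : 2 ≤ G.dist p (W.getVert k₀) := Nat.find_spec hex
  have hk0ne : k₀ ≠ 0 := by
    intro h0
    rw [h0, W.getVert_zero, SimpleGraph.dist_self] at hspec
    omega
  obtain ⟨m, hm⟩ : ∃ m, k₀ = m + 1 := ⟨k₀ - 1, by omega⟩
  have hmlt : ¬ 2 ≤ G.dist p (W.getVert m) := Nat.find_min hex (by omega)
  have hle : k₀ ≤ W.length := Nat.find_le hmem
  have hmlen : m < W.length := by omega
  have hadj : G.Adj (W.getVert m) (W.getVert (m + 1)) := W.adj_getVert_succ hmlen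
  have htri : G.dist p (W.getVert (m+1)) ≤ G.dist p (W.getVert m) + G.dist (W.getVert m) (W.getVert (m+1)) :=
    hG.dist_triangle
  rw [SimpleGraph.dist_eq_one_iff_adj.mpr hadj] at htri
  refine ⟨W.getVert k₀, ?_⟩
  rw [hm] at hspec ⊢
  omega

/-- In a finite connected graph, a proper vertex subset `D` with at least two
vertices is an efficient dominating set iff its minimum gap (in the shortest-path
metric) is `3/2` and its maximum gap is `1`. -/
theorem stmt6 {V : Type*} [Fintype V] (G : SimpleGraph V) (hG : G.Connected)
    (D : Set V) (hcard : 2 ≤ D.ncard) (hne : D ≠ Set.univ) :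
    IsEfficientDominating G D ↔
      (graphMinGap G D = 3/2 ∧ graphMaxGap G D = 1) := by
  classical
  set Spair := {d : ℝ | ∃ p ∈ D, ∃ q ∈ D, p ≠ q ∧ d = (G.dist p q : ℝ)} with hSpair
  set Sv := fun v : V => {d : ℝ | ∃ p ∈ D, d = (G.dist v p : ℝ)} with hSv
  have hSpairFin : Spair.Finite := by
    apply (Set.finite_range fun pq : V × V => (G.dist pq.1 pq.2 : ℝ)).subset
    rintro d ⟨p, -, q, -, -, rfl⟩
    exact ⟨(p, q), rfl⟩
  have hSvFin : ∀ v, (Sv v).Finite := fun v => by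
    apply (Set.finite_range fun p : V => (G.dist v p : ℝ)).subset
    rintro d ⟨p, -, rfl⟩
    exact ⟨p, rfl⟩
  have hSpairBdd : BddBelow Spair := hSpairFin.bddBelow
  have hSvBdd : ∀ v, BddBelow (Sv v) := fun v => (hSvFin v).bddBelow
  obtain ⟨p₀, hp₀, q₀, hq₀, hpq₀⟩ := (Set.one_lt_ncard (Set.toFinite D)).mp hcard
  have hSvNe : ∀ v, (Sv v).Nonempty := fun v => ⟨(G.dist v p₀ : ℝ), p₀, hp₀, rfl⟩
  obtain ⟨v₀, hv₀⟩ : ∃ v₀, v₀ ∉ D := by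
    by_contra h
    push_neg at h
    exact hne (Set.eq_univ_of_forall h)
  constructor
  · intro hD
    -- pairwise distances ≥ 3
    have hge : ∀ p ∈ D, ∀ q ∈ D, p ≠ q → 3 ≤ G.dist p q :=
      fun p hp q hq h => aux_eff_dist hG hD hp hq h
    -- a pair at distance exactly 3
    obtain ⟨w, hw⟩ := aux_exists_dist_two hG (show 2 ≤ G.dist p₀ q₀ by have := hge p₀ hp₀ q₀ hq₀ hpq₀; omega)
    obtain ⟨r, ⟨hr, hrc⟩, -⟩ := hD w
    have hwr : G.dist w r ≤ 1 := by
      rcases hrc with rfl | h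
      · simp [SimpleGraph.dist_self]
      · exact le_of_eq (SimpleGraph.dist_eq_one_iff_adj.mpr h)
    have hrp : r ≠ p₀ := by
      rintro rfl
      rw [SimpleGraph.dist_comm] at hwr
      omega
    have h3 : G.dist p₀ r = 3 := by
      have hle : G.dist p₀ r ≤ G.dist p₀ w + G.dist w r := hG.dist_triangle
      have := hge p₀ hp₀ r hr (Ne.symm hrp)
      omega
    have h3mem : (3 : ℝ) ∈ Spair := ⟨p₀, hp₀, r, hr, Ne.symm hrp, by exact_mod_cast h3.symm⟩
    have hInfPair : sInf Spair = 3 := by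
      apply le_antisymm (csInf_le hSpairBdd h3mem)
      apply le_csInf ⟨3, h3mem⟩
      rintro d ⟨p, hp, q, hq, h, rfl⟩
      exact_mod_cast hge p hp q hq h
    -- every vertex within distance 1 of D
    have hdom : ∀ v, ∃ u ∈ D, G.dist v u ≤ 1 := by
      intro v
      obtain ⟨u, ⟨hu, huc⟩, -⟩ := hD v
      refine ⟨u, hu, ?_⟩
      rcases huc with rfl | h
      · simp [SimpleGraph.dist_self]
      · exact le_of_eq (SimpleGraph.dist_eq_one_iff_adj.mpr h)
    have hInfLe : ∀ v, sInf (Sv v) ≤ 1 := by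
      intro v
      obtain ⟨u, hu, hle⟩ := hdom v
      calc sInf (Sv v) ≤ (G.dist v u : ℝ) := csInf_le (hSvBdd v) ⟨u, hu, rfl⟩
        _ ≤ 1 := by exact_mod_cast hle
    have hInfv₀ : sInf (Sv v₀) = 1 := by
      apply le_antisymm (hInfLe v₀)
      apply le_csInf (hSvNe v₀)
      rintro d ⟨p, hp, rfl⟩
      have : 1 ≤ G.dist v₀ p := hG.pos_dist_of_ne (fun h => hv₀ (h ▸ hp))
      exact_mod_cast this
    constructor
    · rw [graphMinGap, ← hSpair, hInfPair]
    · have : Nonempty V := ⟨p₀⟩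
      rw [graphMaxGap]
      apply le_antisymm
      · exact csSup_le (Set.range_nonempty _) (by rintro d ⟨v, rfl⟩; exact hInfLe v)
      · rw [← hInfv₀]
        exact le_csSup (Set.finite_range _).bddAbove ⟨v₀, rfl⟩
  · rintro ⟨hmin, hmax⟩
    rw [graphMinGap, ← hSpair] at hmin
    have hInfPair : sInf Spair = 3 := by linarith
    have hge : ∀ p ∈ D, ∀ q ∈ D, p ≠ q → 3 ≤ G.dist p q := by
      intro p hp q hq h
      have : (3 : ℝ) ≤ (G.dist p q : ℝ) := hInfPair ▸ csInf_le hSpairBdd ⟨p, hp, q, hq, h, rfl⟩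
      exact_mod_cast this
    have hdom : ∀ v, ∃ u ∈ D, G.dist v u ≤ 1 := by
      intro v
      have h1 : sInf (Sv v) ≤ 1 := by
        rw [graphMaxGap] at hmax
        calc sInf (Sv v) ≤ sSup (Set.range fun v : V => sInf (Sv v)) :=
              le_csSup (Set.finite_range _).bddAbove ⟨v, rfl⟩
          _ = 1 := hmax
      obtain ⟨p, hp, hd⟩ := (hSvNe v).csInf_mem (hSvFin v)
      refine ⟨p, hp, ?_⟩
      have : (G.dist v p : ℝ) ≤ 1 := by rw [← hd]; exact h1
      exact_mod_cast this
    intro v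
    obtain ⟨u, hu, hule⟩ := hdom v
    have hcond : u = v ∨ G.Adj v u := by
      interval_cases h : G.dist v u
      · exact Or.inl (hG.dist_eq_zero_iff.mp h).symm
      · exact Or.inr (SimpleGraph.dist_eq_one_iff_adj.mp h)
    refine ⟨u, ⟨hu, hcond⟩, ?_⟩
    rintro u' ⟨hu', hcond'⟩
    by_contra hne'
    have hd1 : G.dist u' v ≤ 1 := by
      rcases hcond' with rfl | h
      · simp [SimpleGraph.dist_self]
      · exact le_of_eq (SimpleGraph.dist_eq_one_iff_adj.mpr h.symm)
    have hd2 : G.dist v u ≤ 1 := hule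
    have htri : G.dist u' u ≤ G.dist u' v + G.dist v u := hG.dist_triangle
    have := hge u' hu' u hu hne'
    omega
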